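/- Let X be a discrete log-concave random vector in ℤ^n with p.m.f. p and log-concave extension f = e^{-g̃}. If f is integrable on ℝ^n, then for every q ≥ 1 the q-th moment E[(Λ_X^*)^q] = Σ_{k∈ℤ^n} (Λ_X^*(k))^q p(k) is finite. -/

import Mathlib

open MeasureTheory
open scoped ENNReal

/-- `-log t`, valued in `(-∞,+∞]`, with the convention `-log 0 = +∞`. -/
noncomputable def negLogE (t : ℝ) : EReal :=
  if t = 0 then ⊤ else ((- Real.log t : ℝ) : EReal)

/-- The convex extension of `g : ℤⁿ → (-∞,+∞]`: the supremum of all affine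
functions on `ℝⁿ` lying below `g` on the lattice points. -/
noncomputable def convExtN {n : ℕ} (g : (Fin n → ℤ) → EReal) (x : Fin n → ℝ) : EReal :=
  ⨆ (c : (Fin n → ℝ) × ℝ)
    (_ : ∀ k : Fin n → ℤ, (((∑ i, c.1 i * (k i : ℝ)) + c.2 : ℝ) : EReal) ≤ g k),
    (((∑ i, c.1 i * x i) + c.2 : ℝ) : EReal)

/-- The log-concave extension `f = e^{-g̃}` of a mass function `p = e^{-g}` on `ℤⁿ`. -/
noncomputable def logConcaveExt {n : ℕ} (p : (Fin n → ℤ) → ℝ) (x : Fin n → ℝ) : ℝ :=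
  if convExtN (fun k => negLogE (p k)) x = ⊤ then 0
  else Real.exp (-(convExtN (fun k => negLogE (p k)) x).toReal)

/-- The moment generating function of a mass function `p` on `ℤⁿ`, valued in `[0,∞]`. -/
noncomputable def mgfE {n : ℕ} (p : (Fin n → ℤ) → ℝ) (ξ : Fin n → ℝ) : ℝ≥0∞ :=
  ∑' m : Fin n → ℤ, ENNReal.ofReal (p m * Real.exp (∑ i, (m i : ℝ) * ξ i))

/-- The Cramér transform `Λ*` of a mass function `p` on `ℤⁿ`. -/
noncomputable def cramerE {n : ℕ} (p : (Fin n → ℤ) → ℝ) (x : Fin n → ℝ) : EReal :=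
  ⨆ ξ : Fin n → ℝ, (((∑ i, x i * ξ i : ℝ) : EReal) - ENNReal.log (mgfE p ξ))

/-- `EReal → ℝ≥0∞`, sending `⊤` to `⊤` and negative values to `0`. -/
noncomputable def ERealToENNReal (x : EReal) : ℝ≥0∞ :=
  if x = ⊤ then ⊤ else ENNReal.ofReal x.toReal

section Aux

/-- Midpoint log-concavity of `p` on the lattice, from convex-extensibility. -/
lemma lattice_lc {n : ℕ} (p : (Fin n → ℤ) → ℝ) (hp0 : ∀ k, 0 ≤ p k)
    (hext : ∀ k : Fin n → ℤ,
      convExtN (fun m => negLogE (p m)) (fun i => (k i : ℝ)) = negLogE (p k)) :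
    ∀ w z m : Fin n → ℤ, (∀ i, w i + z i = 2 * m i) → p w * p z ≤ p m ^ 2 := by
  intro w z m hm
  by_cases hw : p w = 0
  · rw [hw, zero_mul]; positivity
  by_cases hz : p z = 0
  · rw [hz, mul_zero]; positivity
  have hpw : 0 < p w := (hp0 w).lt_of_ne (Ne.symm hw)
  have hpz : 0 < p z := (hp0 z).lt_of_ne (Ne.symm hz)
  have hub : convExtN (fun m => negLogE (p m)) (fun i => (m i : ℝ)) ≤
      (((-Real.log (p w) + -Real.log (p z)) / 2 : ℝ) : EReal) := by
    rw [convExtN]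
    apply iSup_le; intro c; apply iSup_le; intro hc
    have hw' := hc w
    have hz' := hc z
    rw [negLogE, if_neg hw] at hw'
    rw [negLogE, if_neg hz] at hz'
    have hw2 : (∑ i, c.1 i * (w i : ℝ)) + c.2 ≤ -Real.log (p w) := by exact_mod_cast hw'
    have hz2 : (∑ i, c.1 i * (z i : ℝ)) + c.2 ≤ -Real.log (p z) := by exact_mod_cast hz'
    have hmid : (∑ i, c.1 i * ((m i : ℤ) : ℝ)) + c.2 =
        (((∑ i, c.1 i * (w i : ℝ)) + c.2) + ((∑ i, c.1 i * (z i : ℝ)) + c.2)) / 2 := by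
      have h1 : ∀ i, ((m i : ℤ) : ℝ) = ((w i : ℝ) + (z i : ℝ)) / 2 := by
        intro i
        have := hm i
        have : ((w i : ℝ) + (z i : ℝ)) = 2 * ((m i : ℤ) : ℝ) := by exact_mod_cast congrArg (Int.cast : ℤ → ℝ) this
        linarith
      simp_rw [h1]
      have h2 : ∑ i, c.1 i * (((w i : ℝ) + (z i : ℝ)) / 2)
          = ((∑ i, c.1 i * (w i : ℝ)) + (∑ i, c.1 i * (z i : ℝ))) / 2 := by
        rw [← Finset.sum_add_distrib, Finset.sum_div]
        apply Finset.sum_congr rfl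
        intro i _
        ring
      rw [h2]; ring
    have : (∑ i, c.1 i * ((m i : ℤ) : ℝ)) + c.2 ≤ (-Real.log (p w) + -Real.log (p z)) / 2 := by
      rw [hmid]; linarith
    exact_mod_cast EReal.coe_le_coe_iff.mpr this
  rw [hext m] at hub
  by_cases hm0 : p m = 0
  · rw [negLogE, if_pos hm0] at hub
    exact absurd hub (by simp)
  · rw [negLogE, if_neg hm0] at hub
    have hpm : 0 < p m := (hp0 m).lt_of_ne (Ne.symm hm0)
    have hb : -Real.log (p m) ≤ (-Real.log (p w) + -Real.log (p z)) / 2 := by exact_mod_cast hub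
    have hlog : Real.log (p w) + Real.log (p z) ≤ 2 * Real.log (p m) := by linarith
    calc p w * p z = Real.exp (Real.log (p w) + Real.log (p z)) := by
          rw [Real.exp_add, Real.exp_log hpw, Real.exp_log hpz]
      _ ≤ Real.exp (2 * Real.log (p m)) := Real.exp_le_exp.mpr hlog
      _ = p m ^ 2 := by
          rw [two_mul, Real.exp_add, Real.exp_log hpm]; ring

/-- Uniform exponential decay of a summable lattice log-concave mass function. -/
lemma decay_of_lc {n : ℕ} (p : (Fin n → ℤ) → ℝ) (hp0 : ∀ k, 0 ≤ p k) (hpsum : HasSum p 1)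
    (lc : ∀ w z m : Fin n → ℤ, (∀ i, w i + z i = 2 * m i) → p w * p z ≤ p m ^ 2) :
    ∃ B : ℝ, 0 < B ∧ ∃ C : ℝ, 0 ≤ C ∧
      ∀ k, p k ≤ Real.exp (C - B * (∑ i, |(k i : ℝ)|)) := by
  classical
  set S : (Fin n → ℤ) → ℝ := fun k => ∑ i, |(k i : ℝ)| with hS
  have hS0 : ∀ k, 0 ≤ S k := fun k => Finset.sum_nonneg fun i _ => abs_nonneg _
  have hple1 : ∀ k, p k ≤ 1 := fun k => le_hasSum hpsum k fun _ _ => hp0 _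
  -- parity chooser
  set par : (Fin n → ℤ) → (Fin n → ZMod 2) := fun k i => ((k i : ℤ) : ZMod 2) with hpar
  set Z : (Fin n → ZMod 2) → (Fin n → ℤ) := fun v =>
    if h : ∃ z, p z ≠ 0 ∧ par z = v then h.choose else fun _ => 0 with hZ
  have hZspec : ∀ w : Fin n → ℤ, p w ≠ 0 →
      p (Z (par w)) ≠ 0 ∧ par (Z (par w)) = par w := by
    intro w hw
    have hex : ∃ z, p z ≠ 0 ∧ par z = par w := ⟨w, hw, rfl⟩
    rw [hZ]
    simp only [dif_pos hex]
    exact hex.choose_spec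
  set R : ℝ := ∑ v : Fin n → ZMod 2, S (Z v) with hR
  have hR0 : 0 ≤ R := Finset.sum_nonneg fun v _ => hS0 _
  have hRB : ∀ v, S (Z v) ≤ R := by
    intro v
    exact Finset.single_le_sum (fun v _ => hS0 (Z v)) (Finset.mem_univ v)
  set G : ℝ := ∑ v : Fin n → ZMod 2, |Real.log (p (Z v))| with hG
  have hG0 : 0 ≤ G := Finset.sum_nonneg fun v _ => abs_nonneg _
  have hGB : ∀ v, -Real.log (p (Z v)) ≤ G := by
    intro v
    calc -Real.log (p (Z v)) ≤ |Real.log (p (Z v))| := neg_le_abs _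
      _ ≤ G := Finset.single_le_sum (f := fun v => |Real.log (p (Z v))|)
          (fun v _ => abs_nonneg _) (Finset.mem_univ v)
  -- base radius
  have hε : (0:ℝ) < Real.exp (-(G+1)) := Real.exp_pos _
  have hfin : {k : Fin n → ℤ | ¬ p k < Real.exp (-(G+1))}.Finite := by
    have ht : Filter.Tendsto p Filter.cofinite (nhds 0) := hpsum.summable.tendsto_cofinite_zero
    have : ∀ᶠ k in Filter.cofinite, p k < Real.exp (-(G+1)) :=
      ht (Iio_mem_nhds hε)
    exact Filter.eventually_cofinite.mp this
  set r0 : ℝ := 1 + ∑ k ∈ hfin.toFinset, S k with hr0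
  have hr01 : 1 ≤ r0 := by
    have : 0 ≤ ∑ k ∈ hfin.toFinset, S k := Finset.sum_nonneg fun k _ => hS0 k
    linarith
  have key0 : ∀ k, p k ≠ 0 → r0 ≤ S k → G + 1 ≤ -Real.log (p k) := by
    intro k hk hSk
    have hkE : k ∉ hfin.toFinset := by
      intro hmem
      have : S k ≤ ∑ k ∈ hfin.toFinset, S k :=
        Finset.single_le_sum (fun k _ => hS0 k) hmem
      linarith
    have hklt : p k < Real.exp (-(G+1)) := by
      by_contra hcon
      exact hkE (hfin.mem_toFinset.mpr hcon)
    have hpk : 0 < p k := (hp0 k).lt_of_ne (Ne.symm hk)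
    have := Real.log_lt_log hpk hklt
    rw [Real.log_exp] at this
    linarith
  -- main doubling induction
  have key : ∀ j : ℕ, ∀ w, p w ≠ 0 → 2^j * (r0 + R) - R ≤ S w →
      G + 2^j ≤ -Real.log (p w) := by
    intro j
    induction j with
    | zero =>
      intro w hw hSw
      simp only [pow_zero, one_mul] at hSw ⊢
      exact key0 w hw (by linarith)
    | succ j ih =>
      intro w hw hSw
      set z := Z (par w) with hz
      obtain ⟨hz0, hzpar⟩ := hZspec w hw
      have hdvd : ∀ i, (2:ℤ) ∣ (w i + z i) := by
        intro i
        have hpi : ((z i : ℤ) : ZMod 2) = ((w i : ℤ) : ZMod 2) := congrFun hzpar i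
        have : (((w i + z i : ℤ)) : ZMod 2) = 0 := by
          push_cast
          rw [hpi]
          exact CharTwo.add_self_eq_zero _
        exact_mod_cast (ZMod.intCast_zmod_eq_zero_iff_dvd _ 2).mp this
      set m : Fin n → ℤ := fun i => (w i + z i) / 2 with hm
      have hmEq : ∀ i, w i + z i = 2 * m i := fun i => (Int.mul_ediv_cancel' (hdvd i)).symm
      have hlc := lc w z m hmEq
      have hpw : 0 < p w := (hp0 w).lt_of_ne (Ne.symm hw)
      have hpz : 0 < p z := (hp0 z).lt_of_ne (Ne.symm hz0)
      have hm0 : p m ≠ 0 := by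
        intro h0
        rw [h0] at hlc
        nlinarith
      have hpm : 0 < p m := (hp0 m).lt_of_ne (Ne.symm hm0)
      have hSm : 2^j * (r0 + R) - R ≤ S m := by
        have habs : ∀ i : Fin n, |(w i : ℝ)| ≤ 2 * |(m i : ℝ)| + |(z i : ℝ)| := by
          intro i
          have hcast : ((w i : ℝ) + (z i : ℝ)) = 2 * (m i : ℝ) := by
            exact_mod_cast hmEq i
          have hw' : (w i : ℝ) = 2 * (m i : ℝ) - (z i : ℝ) := by linarith
          rw [hw', sub_eq_add_neg]
          calc |2 * (m i : ℝ) + -(z i : ℝ)| ≤ |2 * (m i : ℝ)| + |-(z i : ℝ)| := abs_add_le _ _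
            _ = 2 * |(m i : ℝ)| + |(z i : ℝ)| := by rw [abs_neg, abs_mul]; norm_num
        have h1 : S w ≤ 2 * S m + S z := by
          show (∑ i, |(w i : ℝ)|) ≤ 2 * S m + S z
          calc ∑ i, |(w i : ℝ)| ≤ ∑ i, (2 * |(m i : ℝ)| + |(z i : ℝ)|) :=
                Finset.sum_le_sum fun i _ => habs i
            _ = 2 * (∑ i, |(m i : ℝ)|) + (∑ i, |(z i : ℝ)|) := by
                rw [Finset.sum_add_distrib, ← Finset.mul_sum]
            _ = 2 * S m + S z := rfl
        have h2 : S z ≤ R := hRB _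
        have h3 : (2:ℝ)^(j+1) = 2 * 2^j := by ring
        rw [h3] at hSw
        linarith
      have hindm := ih m hm0 hSm
      have hlog : Real.log (p w) + Real.log (p z) ≤ 2 * Real.log (p m) := by
        have h1 : Real.log (p w * p z) ≤ Real.log (p m ^ 2) :=
          Real.log_le_log (by positivity) hlc
        rw [Real.log_mul (ne_of_gt hpw) (ne_of_gt hpz), Real.log_pow] at h1
        push_cast at h1
        linarith
      have hgz : -Real.log (p z) ≤ G := hGB _
      have : (2:ℝ)^(j+1) = 2 * 2^j := by ring
      rw [this]
      linarith
  -- wrap up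
  refine ⟨1 / (2 * (r0 + R)), by positivity, (1 / (2 * (r0 + R))) * r0, by positivity, ?_⟩
  set B : ℝ := 1 / (2 * (r0 + R)) with hB
  have hBpos : 0 < B := by positivity
  intro k
  by_cases hk : p k = 0
  · rw [hk]; positivity
  have hpk : 0 < p k := (hp0 k).lt_of_ne (Ne.symm hk)
  by_cases hnear : S k ≤ r0
  · calc p k ≤ 1 := hple1 k
      _ = Real.exp 0 := Real.exp_zero.symm
      _ ≤ Real.exp (B * r0 - B * S k) := by
        apply Real.exp_le_exp.mpr
        nlinarith [hS0 k]
  push_neg at hnear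
  have hex : ∃ j : ℕ, S k < 2^(j+1) * (r0 + R) - R := by
    obtain ⟨j, hj⟩ := pow_unbounded_of_one_lt ((S k + R) / (r0 + R)) (by norm_num : (1:ℝ) < 2)
    refine ⟨j, ?_⟩
    have hpos : (0:ℝ) < r0 + R := by linarith
    have h1 : S k + R < 2^j * (r0 + R) := by
      rw [div_lt_iff₀ hpos] at hj
      linarith
    have h2 : (2:ℝ)^j ≤ 2^(j+1) := by
      apply pow_le_pow_right₀ (by norm_num)
      omega
    nlinarith
  set j := Nat.find hex with hj
  have hjspec : S k < 2^(j+1) * (r0 + R) - R := Nat.find_spec hex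
  have hjlow : 2^j * (r0 + R) - R ≤ S k := by
    rcases Nat.eq_zero_or_pos j with h0 | hpos
    · rw [h0]
      simp only [pow_zero, one_mul]
      linarith
    · have hlt : j - 1 < j := Nat.sub_lt hpos one_pos
      have hmin := Nat.find_min hex hlt
      push_neg at hmin
      have hsucc : j - 1 + 1 = j := Nat.succ_pred_eq_of_pos hpos
      rwa [hsucc] at hmin
  have hkey := key j k hk hjlow
  have huk : B * S k ≤ -Real.log (p k) := by
    have h1 : S k < 2^(j+1) * (r0 + R) := by linarith
    have hpos : (0:ℝ) < 2 * (r0 + R) := by linarith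
    have h2 : (2:ℝ)^(j+1) = 2 * 2^j := by ring
    have h3 : S k / (2 * (r0 + R)) < 2^j := by
      rw [div_lt_iff₀ hpos]
      nlinarith
    have h4 : B * S k = S k / (2 * (r0 + R)) := by
      rw [hB]; ring
    linarith
  calc p k = Real.exp (Real.log (p k)) := (Real.exp_log hpk).symm
    _ ≤ Real.exp (B * r0 - B * S k) := by
      apply Real.exp_le_exp.mpr
      nlinarith [hS0 k]

/-- The Cramér transform at a lattice point is at most `-log p k`. -/
lemma cramer_le {n : ℕ} (p : (Fin n → ℤ) → ℝ) (hp0 : ∀ k, 0 ≤ p k)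
    (k : Fin n → ℤ) (hk : p k ≠ 0) :
    cramerE p (fun i => (k i : ℝ)) ≤ ((-Real.log (p k) : ℝ) : EReal) := by
  rw [cramerE]
  apply iSup_le
  intro ξ
  set s : ℝ := ∑ i, ((k i : ℤ) : ℝ) * ξ i with hs
  have hpk : 0 < p k := (hp0 k).lt_of_ne (Ne.symm hk)
  have hpos : 0 < p k * Real.exp s := by positivity
  have h1 : ENNReal.ofReal (p k * Real.exp s) ≤ mgfE p ξ := ENNReal.le_tsum k
  have hlog : ((Real.log (p k * Real.exp s) : ℝ) : EReal) ≤ ENNReal.log (mgfE p ξ) := by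
    have h2 := ENNReal.log_monotone h1
    rwa [ENNReal.log_ofReal_of_pos hpos] at h2
  calc ((s : ℝ) : EReal) - ENNReal.log (mgfE p ξ)
      ≤ ((s : ℝ) : EReal) - ((Real.log (p k * Real.exp s) : ℝ) : EReal) :=
        EReal.sub_le_sub le_rfl hlog
    _ = ((s - Real.log (p k * Real.exp s) : ℝ) : EReal) := by
        rw [EReal.coe_sub]
    _ = ((-Real.log (p k) : ℝ) : EReal) := by
        norm_cast
        rw [Real.log_mul (ne_of_gt hpk) (Real.exp_ne_zero s), Real.log_exp]
        ring

lemma ERealToENNReal_le_ofReal {x : EReal} {r : ℝ} (h : x ≤ ((r : ℝ) : EReal)) :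
    ERealToENNReal x ≤ ENNReal.ofReal r := by
  rw [ERealToENNReal]
  split_ifs with htop
  · rw [htop] at h
    exact absurd h (by simp)
  · by_cases hbot : x = ⊥
    · simp [hbot]
    · apply ENNReal.ofReal_le_ofReal
      have := EReal.toReal_le_toReal h hbot (by simp)
      rwa [EReal.toReal_coe] at this

lemma rpow_exp_bound {q : ℝ} (hq : 1 ≤ q) :
    ∀ L : ℝ, 0 ≤ L → L ^ q * Real.exp (-L) ≤ (4*q) ^ q * Real.exp (-(L/2)) := by
  intro L hL
  have hq0 : 0 < q := lt_of_lt_of_le one_pos hq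
  have h4q : (0:ℝ) < 4 * q := by linarith
  rcases eq_or_lt_of_le hL with h0 | hLpos
  · rw [← h0, Real.zero_rpow (ne_of_gt hq0), zero_mul]
    positivity
  · have hlogL : Real.log L ≤ L / (4*q) + Real.log (4*q) := by
      have hdiv : (0:ℝ) < L / (4*q) := by positivity
      have h1 : Real.log (L / (4*q)) ≤ L / (4*q) - 1 := Real.log_le_sub_one_of_pos hdiv
      have h2 : Real.log (L / (4*q)) = Real.log L - Real.log (4*q) := by
        rw [Real.log_div (ne_of_gt hLpos) (ne_of_gt h4q)]
      linarith
    have hLq : L ^ q = Real.exp (Real.log L * q) := Real.rpow_def_of_pos hLpos q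
    have h4qq : (4*q) ^ q = Real.exp (Real.log (4*q) * q) := Real.rpow_def_of_pos h4q q
    rw [hLq, h4qq, ← Real.exp_add, ← Real.exp_add]
    apply Real.exp_le_exp.mpr
    have h3 : Real.log L * q ≤ L/4 + Real.log (4*q) * q := by
      have h5 := mul_le_mul_of_nonneg_right hlogL (le_of_lt hq0)
      have h4 : (L / (4*q)) * q = L / 4 := by field_simp
      nlinarith
    linarith

lemma tsum_pi_pow (c : ℤ → ℝ≥0∞) :
    ∀ n : ℕ, ∑' k : Fin n → ℤ, ∏ i, c (k i) = (∑' j : ℤ, c j) ^ n := by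
  intro n
  induction n with
  | zero =>
    rw [pow_zero]
    rw [tsum_eq_single (fun _ => 0) (fun b hb => absurd (Subsingleton.elim b _) hb)]
    simp
  | succ n ih =>
    rw [← (Fin.consEquiv (fun _ => ℤ)).tsum_eq]
    have hterm : ∀ x : ℤ × (Fin n → ℤ),
        (∏ i, c (((Fin.consEquiv (fun _ => ℤ)) x) i)) = c x.1 * ∏ i, c (x.2 i) := by
      intro x
      rw [Fin.prod_univ_succ]
      simp [Fin.consEquiv]
    simp_rw [hterm]
    rw [ENNReal.tsum_prod']
    simp_rw [ENNReal.tsum_mul_left]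
    rw [ENNReal.tsum_mul_right, ih, pow_succ]
    ring

lemma int_exp_sum_ne_top {β : ℝ} (hβ : 0 < β) :
    (∑' j : ℤ, ENNReal.ofReal (Real.exp (-(β * |(j:ℝ)|)))) ≠ ⊤ := by
  have hgeo : Summable (fun m : ℕ => Real.exp (-(β * (m:ℝ)))) := by
    have : ∀ m : ℕ, Real.exp (-(β * (m:ℝ))) = (Real.exp (-β)) ^ m := by
      intro m
      rw [← Real.exp_nat_mul]
      ring_nf
    simp_rw [this]
    exact summable_geometric_of_lt_one (le_of_lt (Real.exp_pos _))
      (Real.exp_lt_one_iff.mpr (by linarith))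
  have hs : Summable (fun j : ℤ => Real.exp (-(β * |(j:ℝ)|))) := by
    apply Summable.of_nat_of_neg
    · apply hgeo.congr
      intro m
      simp [abs_of_nonneg]
    · apply hgeo.congr
      intro m
      push_cast
      rw [abs_neg, abs_of_nonneg (by positivity : (0:ℝ) ≤ (m:ℝ))]
  rw [← ENNReal.ofReal_tsum_of_nonneg (fun _ => (Real.exp_nonneg _)) hs]
  exact ENNReal.ofReal_ne_top

end Aux

/-- If `X` is a discrete log-concave random vector in `ℤⁿ` with p.m.f. `p`
(so `g = -log p` is convex-extensible) whose log-concave extension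
`f = e^{-g̃}` is integrable on `ℝⁿ`, then all moments
`E[(Λ_X^*)^q] = Σ_k (Λ_X^*(k))^q p(k)`, `q ≥ 1`, are finite. -/
theorem cramer_moments_finite_of_integrable_extension {n : ℕ}
    (p : (Fin n → ℤ) → ℝ) (hp0 : ∀ k, 0 ≤ p k) (hpsum : HasSum p 1)
    (hext : ∀ k : Fin n → ℤ,
      convExtN (fun m => negLogE (p m)) (fun i => (k i : ℝ)) = negLogE (p k))
    (hint : Integrable (logConcaveExt p) (volume : Measure (Fin n → ℝ))) :
    ∀ q : ℝ, 1 ≤ q →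
      ∑' k : Fin n → ℤ,
        ENNReal.ofReal (p k) * (ERealToENNReal (cramerE p (fun i => (k i : ℝ)))) ^ q ≠ ⊤ := by
  intro q hq
  have hq0 : (0:ℝ) ≤ q := le_trans zero_le_one hq
  obtain ⟨B, hB, C, hC, hdecay⟩ := decay_of_lc p hp0 hpsum (lattice_lc p hp0 hext)
  set K : ℝ := (4*q)^q * Real.exp (C/2) with hK
  have hKpos : 0 < K := by
    rw [hK]
    have : (0:ℝ) < (4*q)^q := Real.rpow_pos_of_pos (by linarith) q
    positivity
  have hterm : ∀ k : Fin n → ℤ,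
      ENNReal.ofReal (p k) * (ERealToENNReal (cramerE p (fun i => (k i : ℝ)))) ^ q
        ≤ ENNReal.ofReal (K * Real.exp (-((B/2) * ∑ i, |(k i : ℝ)|))) := by
    intro k
    by_cases hk : p k = 0
    · rw [hk, ENNReal.ofReal_zero, zero_mul]
      exact zero_le
    · have hpk : 0 < p k := (hp0 k).lt_of_ne (Ne.symm hk)
      set L : ℝ := -Real.log (p k) with hL
      have hple1 : p k ≤ 1 := le_hasSum hpsum k fun _ _ => hp0 _
      have hL0 : 0 ≤ L := by
        have := Real.log_nonpos (hp0 k) hple1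
        rw [hL]; linarith
      have h1 : ERealToENNReal (cramerE p (fun i => (k i : ℝ))) ≤ ENNReal.ofReal L :=
        ERealToENNReal_le_ofReal (cramer_le p hp0 k hk)
      have h2 : (ERealToENNReal (cramerE p (fun i => (k i : ℝ)))) ^ q
          ≤ ENNReal.ofReal (L ^ q) := by
        calc (ERealToENNReal (cramerE p (fun i => (k i : ℝ)))) ^ q
            ≤ (ENNReal.ofReal L) ^ q := ENNReal.rpow_le_rpow h1 hq0
          _ = ENNReal.ofReal (L ^ q) := ENNReal.ofReal_rpow_of_nonneg hL0 hq0
      have hreal : p k * L ^ q ≤ K * Real.exp (-((B/2) * ∑ i, |(k i : ℝ)|)) := by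
        have hpkeq : p k = Real.exp (-L) := by
          rw [hL, neg_neg, Real.exp_log hpk]
        have hmaster := rpow_exp_bound hq L hL0
        have hhalf : Real.exp (-(L/2)) ≤
            Real.exp (C/2) * Real.exp (-((B/2) * ∑ i, |(k i : ℝ)|)) := by
          have hd := hdecay k
          have hle : -L ≤ C - B * ∑ i, |(k i : ℝ)| := by
            have := Real.log_le_log hpk hd
            rw [Real.log_exp] at this
            rw [hL]; linarith
          rw [← Real.exp_add]
          apply Real.exp_le_exp.mpr
          linarith
        calc p k * L ^ q = L ^ q * Real.exp (-L) := by rw [hpkeq]; ring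
          _ ≤ (4*q)^q * Real.exp (-(L/2)) := hmaster
          _ ≤ (4*q)^q * (Real.exp (C/2) * Real.exp (-((B/2) * ∑ i, |(k i : ℝ)|))) := by
              apply mul_le_mul_of_nonneg_left hhalf
              positivity
          _ = K * Real.exp (-((B/2) * ∑ i, |(k i : ℝ)|)) := by rw [hK]; ring
      calc ENNReal.ofReal (p k) * (ERealToENNReal (cramerE p (fun i => (k i : ℝ)))) ^ q
          ≤ ENNReal.ofReal (p k) * ENNReal.ofReal (L ^ q) := mul_le_mul_right h2 _
        _ = ENNReal.ofReal (p k * L ^ q) := (ENNReal.ofReal_mul (hp0 k)).symm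
        _ ≤ ENNReal.ofReal (K * Real.exp (-((B/2) * ∑ i, |(k i : ℝ)|))) :=
            ENNReal.ofReal_le_ofReal hreal
  have hrhs : (∑' k : Fin n → ℤ,
      ENNReal.ofReal (K * Real.exp (-((B/2) * ∑ i, |(k i : ℝ)|)))) ≠ ⊤ := by
    have heq : ∀ k : Fin n → ℤ,
        ENNReal.ofReal (K * Real.exp (-((B/2) * ∑ i, |(k i : ℝ)|)))
          = ENNReal.ofReal K * ∏ i, ENNReal.ofReal (Real.exp (-((B/2) * |(k i : ℝ)|))) := by
      intro k
      rw [ENNReal.ofReal_mul (le_of_lt hKpos)]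
      congr 1
      have hsum : -((B/2) * ∑ i, |(k i : ℝ)|) = ∑ i, -((B/2) * |(k i : ℝ)|) := by
        rw [Finset.mul_sum, ← Finset.sum_neg_distrib]
      rw [hsum, Real.exp_sum]
      exact ENNReal.ofReal_prod_of_nonneg fun i _ => Real.exp_nonneg _
    simp_rw [heq]
    rw [ENNReal.tsum_mul_left, tsum_pi_pow (fun j => ENNReal.ofReal (Real.exp (-((B/2) * |(j:ℝ)|)))) n]
    exact ENNReal.mul_ne_top ENNReal.ofReal_ne_top
      (ENNReal.pow_ne_top (int_exp_sum_ne_top (by positivity)))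
  exact ne_top_of_le_ne_top hrhs (ENNReal.tsum_le_tsum hterm)
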